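/- Let s = r+1, let L ∈ ℝ^{2×2} be invertible, A ∈ ℝ^{s×s} with last row equal to the weight vector b (i.e., a_{s,j} = b_j for all j), let N⁵ ∈ ℝ^{s×s} be the matrix with all columns zero except the last, which has all entries -1, and set N⁴ = Δt A. Assume K = I_{2s} - N⁴ ⊗ L is invertible. Define the RK iteration: k_n solves (I_{2s} - Δt A ⊗ L)k_n = 1_s ⊗ (L z_n), and z_{n+1} = z_n + Δt Σ_j b_j k_{j,n}; define the DG iteration: ẑ_{n+1} solves (I_{2s} - N⁴ ⊗ L)ẑ_{n+1} = -(N⁵ ⊗ I₂)ẑ_n. If the last 2 components of ẑ_0 equal z_0, then for all n ≥ 1 the last 2 components of ẑ_n equal z_n and ẑ_n = (I_s ⊗ L⁻¹)k_{n-1}. -/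

import Mathlib

open Matrix Kronecker

lemma kmv_aux {s : ℕ} (M : Matrix (Fin s) (Fin s) ℝ) (B : Matrix (Fin 2) (Fin 2) ℝ)
    (w : Fin s × Fin 2 → ℝ) (i : Fin s) (a : Fin 2) :
    ((M ⊗ₖ B).mulVec w) (i, a) = ∑ j, M i j * (B.mulVec (fun c => w (j, c))) a := by
  simp [Matrix.mulVec, dotProduct, Fintype.sum_prod_type, Finset.mul_sum, mul_assoc,
    mul_add]

/-- equivalence of the DG time-stepping scheme in Kronecker form
with an s-stage implicit Runge–Kutta method (s = r+1) for z' = Lz. -/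
theorem stmt_15 (r : ℕ) (Δt : ℝ)
    (L : Matrix (Fin 2) (Fin 2) ℝ) (hL : IsUnit L.det)
    (A : Matrix (Fin (r + 1)) (Fin (r + 1)) ℝ) (b : Fin (r + 1) → ℝ)
    (hAb : ∀ j, A (Fin.last r) j = b j)
    (N5 : Matrix (Fin (r + 1)) (Fin (r + 1)) ℝ)
    (hN5 : ∀ i j, N5 i j = if j = Fin.last r then -1 else 0)
    (N4 : Matrix (Fin (r + 1)) (Fin (r + 1)) ℝ) (hN4 : N4 = Δt • A)
    (hK : IsUnit ((1 : Matrix (Fin (r + 1) × Fin 2) (Fin (r + 1) × Fin 2) ℝ)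
        - N4 ⊗ₖ L).det)
    (z : ℕ → Fin 2 → ℝ) (k : ℕ → Fin (r + 1) × Fin 2 → ℝ)
    (zh : ℕ → Fin (r + 1) × Fin 2 → ℝ)
    (hRK : ∀ n, ((1 : Matrix (Fin (r + 1) × Fin 2) (Fin (r + 1) × Fin 2) ℝ)
        - Δt • (A ⊗ₖ L)).mulVec (k n) = fun p => L.mulVec (z n) p.2)
    (hstep : ∀ n, z (n + 1) = z n + Δt • ∑ j : Fin (r + 1), b j • (fun i => k n (j, i)))
    (hDG : ∀ n, ((1 : Matrix (Fin (r + 1) × Fin 2) (Fin (r + 1) × Fin 2) ℝ)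
        - N4 ⊗ₖ L).mulVec (zh (n + 1))
        = -((N5 ⊗ₖ (1 : Matrix (Fin 2) (Fin 2) ℝ)).mulVec (zh n)))
    (h0 : ∀ i, zh 0 (Fin.last r, i) = z 0 i) :
    ∀ n : ℕ, 1 ≤ n →
      (∀ i, zh n (Fin.last r, i) = z n i) ∧
      zh n = (((1 : Matrix (Fin (r + 1)) (Fin (r + 1)) ℝ)) ⊗ₖ L⁻¹).mulVec (k (n - 1)) := by
  set K : Matrix (Fin (r + 1) × Fin 2) (Fin (r + 1) × Fin 2) ℝ :=
    (1 : Matrix (Fin (r + 1) × Fin 2) (Fin (r + 1) × Fin 2) ℝ) - N4 ⊗ₖ L with hKdef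
  set E : Matrix (Fin (r + 1) × Fin 2) (Fin (r + 1) × Fin 2) ℝ :=
    ((1 : Matrix (Fin (r + 1)) (Fin (r + 1)) ℝ)) ⊗ₖ L⁻¹ with hEdef
  have hLinv : L⁻¹ * L = 1 := Matrix.nonsing_inv_mul L hL
  have hLinv' : L * L⁻¹ = 1 := Matrix.mul_nonsing_inv L hL
  have hN4L : N4 ⊗ₖ L = Δt • (A ⊗ₖ L) := by rw [hN4, Matrix.smul_kronecker]
  have hcomm : K * E = E * K := by
    rw [hKdef, Matrix.sub_mul, Matrix.mul_sub, Matrix.one_mul, Matrix.mul_one,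
      ← Matrix.mul_kronecker_mul, ← Matrix.mul_kronecker_mul, hLinv, hLinv',
      Matrix.one_mul, Matrix.mul_one]
  have hinj : Function.Injective K.mulVec :=
    Matrix.mulVec_injective_iff_isUnit.mpr ((Matrix.isUnit_iff_isUnit_det K).mpr hK)
  -- main step
  have main : ∀ n, (∀ i, zh n (Fin.last r, i) = z n i) →
      zh (n + 1) = E.mulVec (k n) ∧ ∀ i, zh (n + 1) (Fin.last r, i) = z (n + 1) i := by
    intro n hz
    -- k n at the last row equals L * z(n+1)
    have hk : (fun c => k n (Fin.last r, c)) = L.mulVec (z (n + 1)) := by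
      funext i
      have h := congrFun (hRK n) (Fin.last r, i)
      rw [Matrix.sub_mulVec, Matrix.one_mulVec, Matrix.smul_mulVec] at h
      simp only [Pi.sub_apply, Pi.smul_apply, smul_eq_mul] at h
      rw [kmv_aux] at h
      have hr : L.mulVec (z (n + 1)) i
          = L.mulVec (z n) i + Δt * ∑ j, b j * L.mulVec (fun c => k n (j, c)) i := by
        rw [hstep n, Matrix.mulVec_add, Matrix.mulVec_smul]
        have : L.mulVec (∑ j : Fin (r + 1), b j • (fun i => k n (j, i)))
            = ∑ j : Fin (r + 1), b j • L.mulVec (fun c => k n (j, c)) := by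
          rw [← Matrix.mulVecLin_apply, map_sum]
          simp [Matrix.mulVecLin_apply, Matrix.mulVec_smul]
        rw [this]
        simp only [Pi.add_apply, Pi.smul_apply, smul_eq_mul, Finset.sum_apply, Finset.mul_sum]
      rw [hr, ← h]
      simp only [hAb]
      ring
    constructor
    · -- both sides multiplied by K agree
      apply hinj
      have h1 : K.mulVec (zh (n + 1)) = fun p => z n p.2 := by
        rw [hDG n]
        funext p
        obtain ⟨i, a⟩ := p
        simp [Matrix.mulVec, dotProduct, Fintype.sum_prod_type, hN5, hz,
          Matrix.one_apply, ite_mul, mul_ite]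
      have h2 : K.mulVec (E.mulVec (k n)) = fun p => z n p.2 := by
        rw [Matrix.mulVec_mulVec, hcomm, ← Matrix.mulVec_mulVec]
        have hKk : K.mulVec (k n) = fun p => L.mulVec (z n) p.2 := by
          rw [hKdef, hN4L]; exact hRK n
        rw [hKk]
        funext p
        obtain ⟨i, a⟩ := p
        rw [hEdef, kmv_aux]
        simp only [Matrix.one_apply, ite_mul, one_mul, zero_mul]
        rw [Finset.sum_ite_eq Finset.univ i]
        simp only [Finset.mem_univ, if_true]
        rw [show (fun c => L.mulVec (z n) (i, c).2) = L.mulVec (z n) from rfl,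
          Matrix.mulVec_mulVec, hLinv, Matrix.one_mulVec]
      rw [h1, h2]
    · intro i
      have hz1 : zh (n + 1) = E.mulVec (k n) := by
        apply hinj
        have h1 : K.mulVec (zh (n + 1)) = fun p => z n p.2 := by
          rw [hDG n]
          funext p
          obtain ⟨i, a⟩ := p
          simp [Matrix.mulVec, dotProduct, Fintype.sum_prod_type, hN5, hz,
            Matrix.one_apply, ite_mul, mul_ite]
        have h2 : K.mulVec (E.mulVec (k n)) = fun p => z n p.2 := by
          rw [Matrix.mulVec_mulVec, hcomm, ← Matrix.mulVec_mulVec]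
          have hKk : K.mulVec (k n) = fun p => L.mulVec (z n) p.2 := by
            rw [hKdef, hN4L]; exact hRK n
          rw [hKk]
          funext p
          obtain ⟨i, a⟩ := p
          rw [hEdef, kmv_aux]
          simp only [Matrix.one_apply, ite_mul, one_mul, zero_mul]
          rw [Finset.sum_ite_eq Finset.univ i]
          simp only [Finset.mem_univ, if_true]
          rw [show (fun c => L.mulVec (z n) (i, c).2) = L.mulVec (z n) from rfl,
            Matrix.mulVec_mulVec, hLinv, Matrix.one_mulVec]
        rw [h1, h2]
      rw [hz1, hEdef, kmv_aux]
      simp only [Matrix.one_apply, ite_mul, one_mul, zero_mul]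
      rw [Finset.sum_ite_eq Finset.univ (Fin.last r)]
      simp only [Finset.mem_univ, if_true]
      rw [hk, Matrix.mulVec_mulVec, hLinv, Matrix.one_mulVec]
  have hall : ∀ n, ∀ i, zh n (Fin.last r, i) = z n i := by
    intro n
    induction n with
    | zero => exact h0
    | succ m ih => exact (main m ih).2
  intro n hn
  obtain ⟨m, rfl⟩ : ∃ m, n = m + 1 := ⟨n - 1, (Nat.succ_pred_eq_of_pos hn).symm⟩
  refine ⟨hall (m + 1), ?_⟩
  simpa using (main m (hall m)).1
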